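/- Let n be a nonempty finite type, κ a finite type, and P : κ → Matrix n n ℂ a family of matrices with (P k)* = P k, P k * P k = P k, P k * P l = 0 for k ≠ l, and Σ_k P k = 1. Let σ be a positive definite matrix of trace 1 with σ * P k = P k * σ for all k, and let ρ be a positive definite matrix of trace 1. Set 𝓔(ρ) := Σ_k P k * ρ * P k. Then 𝓔(ρ) is positive definite of trace 1 and D(ρ‖σ) = D(ρ‖𝓔(ρ)) + D(𝓔(ρ)‖σ). -/

import Mathlib

open Matrix
open scoped ComplexOrder

/-- matrix logarithm via the continuous functional calculus -/
noncomputable def mlog {n : Type*} [Fintype n] [DecidableEq n] (A : Matrix n n ℂ) :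
    Matrix n n ℂ := cfc Real.log A

/-- quantum relative entropy `D(ρ‖σ) = Re Tr[ρ (log ρ − log σ)]` -/
noncomputable def relEnt {n : Type*} [Fintype n] [DecidableEq n]
    (ρ σ : Matrix n n ℂ) : ℝ := (Matrix.trace (ρ * (mlog ρ - mlog σ))).re


-- commute with cfc
lemma commute_cfc_aux {n : Type*} [Fintype n] [DecidableEq n]
    {A B : Matrix n n ℂ} (hA : A.IsHermitian) (h : Commute A B) (f : ℝ → ℝ) :
    Commute (cfc f A) B := by
  rw [hA.cfc_eq]
  unfold Matrix.IsHermitian.cfc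
  set U : Matrix n n ℂ := (hA.eigenvectorUnitary : Matrix n n ℂ) with hUdef
  have hU1 : U * star U = 1 := (Matrix.mem_unitaryGroup_iff).mp hA.eigenvectorUnitary.2
  have hU2 : star U * U = 1 := (Matrix.mem_unitaryGroup_iff').mp hA.eigenvectorUnitary.2
  set C : Matrix n n ℂ := star U * B * U with hCdef
  set d : n → ℂ := (RCLike.ofReal ∘ hA.eigenvalues) with hddef
  have hspec : A = U * diagonal d * star U := hA.spectral_theorem
  have hdC : diagonal d * C = C * diagonal d := by
    have h1 : star U * A * U = diagonal d := by
      rw [hspec]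
      calc star U * (U * diagonal d * star U) * U
          = (star U * U) * diagonal d * (star U * U) := by simp only [mul_assoc]
        _ = diagonal d := by rw [hU2, one_mul, mul_one]
    calc diagonal d * C = (star U * A * U) * (star U * B * U) := by rw [h1]
      _ = star U * (A * B) * U := by
          rw [show star U * A * U * (star U * B * U)
              = star U * A * (U * star U) * B * U by simp only [mul_assoc], hU1, mul_one]
          simp only [mul_assoc]
      _ = star U * (B * A) * U := by rw [h]
      _ = (star U * B * U) * (star U * A * U) := by
          rw [show star U * B * U * (star U * A * U)
              = star U * B * (U * star U) * A * U by simp only [mul_assoc], hU1, mul_one]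
          simp only [mul_assoc]
      _ = C * diagonal d := by rw [h1]
  have hfC : diagonal (RCLike.ofReal ∘ f ∘ hA.eigenvalues) * C
      = C * diagonal (RCLike.ofReal ∘ f ∘ hA.eigenvalues) := by
    ext i j
    have hentry : d i * C i j = C i j * d j := by
      have := congrFun (congrFun hdC i) j
      simpa [Matrix.mul_apply, Matrix.diagonal, Finset.sum_ite_eq, Finset.sum_ite_eq',
        mul_comm] using this
    simp only [Matrix.diagonal_mul, Matrix.mul_diagonal, Function.comp_apply]
    rcases eq_or_ne (C i j) 0 with hc | hc
    · simp [hc]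
    · have hde : d i = d j := by
        have := hentry
        rw [mul_comm (C i j) (d j)] at this
        exact mul_right_cancel₀ hc (by rw [mul_comm] at this ⊢; exact this)
      have hde' : (hA.eigenvalues i : ℂ) = (hA.eigenvalues j : ℂ) := hde
      have : hA.eigenvalues i = hA.eigenvalues j := by exact_mod_cast hde'
      rw [this, mul_comm]
  show U * diagonal _ * star U * B = B * (U * diagonal _ * star U)
  calc U * diagonal (RCLike.ofReal ∘ f ∘ hA.eigenvalues) * star U * B
      = U * (diagonal (RCLike.ofReal ∘ f ∘ hA.eigenvalues) * C) * star U := by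
        rw [hCdef]
        rw [show U * (diagonal (RCLike.ofReal ∘ f ∘ hA.eigenvalues) * (star U * B * U)) * star U
            = U * diagonal (RCLike.ofReal ∘ f ∘ hA.eigenvalues) * star U * B * (U * star U) by simp only [mul_assoc],
          hU1, mul_one]
    _ = U * (C * diagonal (RCLike.ofReal ∘ f ∘ hA.eigenvalues)) * star U := by rw [hfC]
    _ = B * (U * diagonal (RCLike.ofReal ∘ f ∘ hA.eigenvalues) * star U) := by
        rw [hCdef]
        rw [show U * (star U * B * U * diagonal (RCLike.ofReal ∘ f ∘ hA.eigenvalues)) * star U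
            = (U * star U) * B * (U * diagonal (RCLike.ofReal ∘ f ∘ hA.eigenvalues) * star U) by simp only [mul_assoc],
          hU1, one_mul]

section Helpers

variable {n : Type*} [Fintype n] [DecidableEq n]

omit [DecidableEq n] in
lemma sum_mulVec_aux {κ : Type*} [Fintype κ] (M : κ → Matrix n n ℂ) (x : n → ℂ) :
    (∑ k, M k) *ᵥ x = ∑ k, M k *ᵥ x := by
  ext i
  simp [Matrix.mulVec, dotProduct, Matrix.sum_apply, Finset.sum_apply,
    Finset.sum_mul]
  rw [Finset.sum_comm]

omit [DecidableEq n] in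
lemma dotProduct_sum_aux {κ : Type*} [Fintype κ] (v : n → ℂ) (w : κ → n → ℂ) :
    v ⬝ᵥ (∑ k, w k) = ∑ k, v ⬝ᵥ w k := by
  simp [dotProduct, Finset.sum_apply, Finset.mul_sum]
  rw [Finset.sum_comm]

lemma trace_pinch {κ : Type*} [Fintype κ] (P : κ → Matrix n n ℂ)
    (hPidem : ∀ k, P k * P k = P k)
    (hPsum : ∑ k, P k = 1)
    (ρ X : Matrix n n ℂ) (hX : ∀ k, P k * X = X * P k) :
    Matrix.trace ((∑ k, P k * ρ * P k) * X) = Matrix.trace (ρ * X) := by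
  rw [Finset.sum_mul, Matrix.trace_sum]
  have h1 : ∀ k, Matrix.trace (P k * ρ * P k * X) = Matrix.trace (ρ * X * P k) := by
    intro k
    have e1 : P k * ρ * P k * X = P k * (ρ * (X * P k)) := by
      simp only [mul_assoc, hX k]
    rw [e1, Matrix.trace_mul_comm]
    have e2 : ρ * (X * P k) * P k = ρ * X * P k := by
      simp only [mul_assoc, hPidem k]
    rw [e2]
  simp_rw [h1]
  have : ∑ k, Matrix.trace (ρ * X * P k) = Matrix.trace (ρ * X * ∑ k, P k) := by
    rw [Finset.mul_sum, Matrix.trace_sum]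
  rw [this, hPsum, mul_one]

end Helpers


/-- **Pinching chain rule** (used in the proof of Theorem 4.1, part 2):
for the pinching `𝓔(ρ) = Σ_k P_k ρ P_k` along orthogonal projections commuting
with `σ`, one has `D(ρ‖σ) = D(ρ‖𝓔(ρ)) + D(𝓔(ρ)‖σ)`, and `𝓔(ρ)` is a positive
definite state. -/
theorem relEnt_pinching_chain_rule
    {n : Type*} [Fintype n] [DecidableEq n] [Nonempty n]
    {κ : Type*} [Fintype κ] [DecidableEq κ]
    (P : κ → Matrix n n ℂ)
    (hPsa : ∀ k, (P k)ᴴ = P k)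
    (hPidem : ∀ k, P k * P k = P k)
    (hPorth : ∀ k l, k ≠ l → P k * P l = 0)
    (hPsum : ∑ k, P k = 1)
    (σ : Matrix n n ℂ) (hσ : σ.PosDef) (hσtr : Matrix.trace σ = 1)
    (hσP : ∀ k, σ * P k = P k * σ)
    (ρ : Matrix n n ℂ) (hρ : ρ.PosDef) (hρtr : Matrix.trace ρ = 1) :
    ((∑ k, P k * ρ * P k).PosDef ∧ Matrix.trace (∑ k, P k * ρ * P k) = 1) ∧
    relEnt ρ σ = relEnt ρ (∑ k, P k * ρ * P k) + relEnt (∑ k, P k * ρ * P k) σ := by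
  -- E commutes with each projection
  have hEP : ∀ l, (∑ k, P k * ρ * P k) * P l = P l * (∑ k, P k * ρ * P k) := by
    intro l
    rw [Finset.sum_mul, Finset.mul_sum]
    refine Finset.sum_congr rfl fun k _ => ?_
    rcases eq_or_ne k l with rfl | hkl
    · have e1 : P k * ρ * P k * P k = P k * ρ * P k := by
        simp only [mul_assoc, hPidem k]
      have e2 : P k * (P k * ρ * P k) = P k * ρ * P k := by
        rw [← mul_assoc, ← mul_assoc, hPidem k]
      rw [e1, e2]
    · have e1 : P k * ρ * P k * P l = 0 := by
        rw [mul_assoc, hPorth k l hkl, mul_zero]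
      have e2 : P l * (P k * ρ * P k) = 0 := by
        rw [← mul_assoc, ← mul_assoc, hPorth l k (Ne.symm hkl), zero_mul, zero_mul]
      rw [e1, e2]
  -- E is Hermitian
  have hEherm : (∑ k, P k * ρ * P k).IsHermitian := by
    show (∑ k, P k * ρ * P k)ᴴ = ∑ k, P k * ρ * P k
    rw [Matrix.conjTranspose_sum]
    refine Finset.sum_congr rfl fun k _ => ?_
    rw [Matrix.conjTranspose_mul, Matrix.conjTranspose_mul, hPsa k, hρ.1.eq, ← mul_assoc]
  -- E is positive definite
  have hEpd : (∑ k, P k * ρ * P k).PosDef := by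
    refine .of_dotProduct_mulVec_pos hEherm fun x hx => ?_
    have hterm : ∀ k, (star x) ⬝ᵥ ((P k * ρ * P k) *ᵥ x)
        = star (P k *ᵥ x) ⬝ᵥ (ρ *ᵥ (P k *ᵥ x)) := by
      intro k
      rw [Matrix.star_mulVec, Matrix.mulVec_mulVec, ← Matrix.dotProduct_mulVec,
        Matrix.mulVec_mulVec, hPsa k, ← mul_assoc]
    have hxsum : ∑ k, P k *ᵥ x = x := by
      rw [← sum_mulVec_aux, hPsum, Matrix.one_mulVec]
    obtain ⟨k₀, hk₀⟩ : ∃ k, P k *ᵥ x ≠ 0 := by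
      by_contra hcon
      push_neg at hcon
      apply hx
      rw [← hxsum]
      simp [hcon]
    rw [sum_mulVec_aux, dotProduct_sum_aux]
    simp_rw [hterm]
    exact Finset.sum_pos' (fun k _ => hρ.posSemidef.dotProduct_mulVec_nonneg _)
      ⟨k₀, Finset.mem_univ _, hρ.dotProduct_mulVec_pos hk₀⟩
  constructor
  · refine ⟨hEpd, ?_⟩
    have := trace_pinch P hPidem hPsum ρ 1 (by simp)
    simpa [hρtr] using this
  · -- the chain rule identity
    have hlogσ : ∀ k, P k * mlog σ = mlog σ * P k := by
      intro k
      exact (commute_cfc_aux hσ.1 (hσP k) Real.log).symm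
    have hlogE : ∀ k, P k * mlog (∑ k, P k * ρ * P k)
        = mlog (∑ k, P k * ρ * P k) * P k := by
      intro k
      exact (commute_cfc_aux hEpd.1 (hEP k) Real.log).symm
    have tσ : Matrix.trace ((∑ k, P k * ρ * P k) * mlog σ)
        = Matrix.trace (ρ * mlog σ) := trace_pinch P hPidem hPsum ρ _ hlogσ
    have tE : Matrix.trace ((∑ k, P k * ρ * P k) * mlog (∑ k, P k * ρ * P k))
        = Matrix.trace (ρ * mlog (∑ k, P k * ρ * P k)) :=
      trace_pinch P hPidem hPsum ρ _ hlogE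
    unfold relEnt
    simp only [mul_sub, Matrix.trace_sub, Complex.sub_re]
    rw [tσ, tE]
    ring
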